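/- Let A : ℝ → ℝ be three times continuously differentiable, η : ℝ → ℝ twice continuously differentiable, and let q : ℝ → ℝ satisfy q'(u) = A'(u)·η'(u) for all u. Let u₊, u₋, ū₊, ū₋ ∈ ℝ, set σ := σ(u₊,u₋) and κ := A(u₊) − σ·u₊. Then q(u₊;ū₊) − q(u₋;ū₋) − σ·(η(u₊|ū₊) − η(u₋|ū₋)) = ∫_{u₊}^{u₋} η''(u)·(A(u) − σ·u − κ) du − ∫_{ū₊}^{ū₋} η''(u)·(A(u) − σ·u − κ) du. -/

import Mathlib

/-- Rewriting of the relative entropy dissipation of a shock as a difference of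
two integrals (structural lemma from Serre–Vasseur).  Here
`η(a|b) = η(a) − η(b) − η'(b)(a−b)` is the relative entropy,
`q(a;b) = q(a) − q(b) − η'(b)(A(a)−A(b))` the relative entropy flux,
`σ` the shock-speed function and `κ = A(u₊) − σ·u₊`. -/
theorem entropy_dissipation_rewrite
    (A η q : ℝ → ℝ)
    (hA : ContDiff ℝ 3 A) (hη : ContDiff ℝ 2 η)
    (hq : ∀ u : ℝ, HasDerivAt q (deriv A u * deriv η u) u)
    (σ : ℝ → ℝ → ℝ)
    (hσ_off : ∀ v w : ℝ, v ≠ w → σ v w = (A v - A w) / (v - w))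
    (hσ_diag : ∀ v : ℝ, σ v v = deriv A v)
    (up um bup bum : ℝ) :
    ((q up - q bup - deriv η bup * (A up - A bup))
        - (q um - q bum - deriv η bum * (A um - A bum)))
      - σ up um * ((η up - η bup - deriv η bup * (up - bup))
        - (η um - η bum - deriv η bum * (um - bum)))
    = (∫ u in up..um, deriv (deriv η) u * (A u - σ up um * u - (A up - σ up um * up)))
      - ∫ u in bup..bum, deriv (deriv η) u * (A u - σ up um * u - (A up - σ up um * up)) := by
  set s := σ up um with hs
  set κ := A up - s * up with hκ
  -- η' is C¹
  have hη1 : ContDiff ℝ 1 (deriv η) := by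
    have := ContDiff.iterate_deriv' 1 1 (f := η) (by exact_mod_cast hη)
    simpa using this
  have hη'diff : Differentiable ℝ η := hη.differentiable (by norm_num)
  have hη''cont : Continuous (deriv (deriv η)) := hη1.continuous_deriv le_rfl
  have hAdiff : Differentiable ℝ A := hA.differentiable (by norm_num)
  have hAcont : Continuous A := hA.continuous
  -- FTC for each integral with primitive G
  set G : ℝ → ℝ := fun u => deriv η u * (A u - s * u - κ) - q u + s * η u with hG
  have key : ∀ a b : ℝ,
      (∫ u in a..b, deriv (deriv η) u * (A u - s * u - κ)) = G b - G a := by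
    intro a b
    apply intervalIntegral.integral_eq_sub_of_hasDerivAt
    · intro u _
      have h1 : HasDerivAt (deriv η) (deriv (deriv η) u) u :=
        ((hη1.differentiable one_ne_zero) u).hasDerivAt
      have h2 : HasDerivAt A (deriv A u) u := (hAdiff u).hasDerivAt
      have h3 : HasDerivAt η (deriv η u) u := (hη'diff u).hasDerivAt
      have h4 : HasDerivAt (fun u => A u - s * u - κ) (deriv A u - s) u := by
        simpa using (h2.sub ((hasDerivAt_id u).const_mul s)).sub_const κ
      have := ((h1.mul h4).sub (hq u)).add (h3.const_mul s)
      convert this using 1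
      · rfl
      ring
    · exact (hη''cont.mul ((hAcont.sub (continuous_const.mul continuous_id)).sub
        continuous_const)).intervalIntegrable _ _
  rw [key, key]
  -- key algebraic fact: A um - s * um = A up - s * up
  have h1 : A um - s * um = A up - s * up := by
    rcases eq_or_ne up um with h | h
    · rw [h]
    · have hne : up - um ≠ 0 := sub_ne_zero.mpr h
      rw [hs, hσ_off up um h]
      field_simp
      ring
  simp only [hG, hκ]
  linear_combination (deriv η bum - deriv η um) * h1
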